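/- Let q be a non-real quaternion. A polynomial P ∈ ℍ[x] vanishes at both q and conj(q) if and only if the characteristic polynomial Q_q(x) = x² − 2 Re(q) x + |q|² divides P on the right, i.e., P = Q' * Q_q for some Q' ∈ ℍ[x]. -/

import Mathlib

open Polynomial Quaternion

noncomputable def charQ (q : Quaternion ℝ) : Polynomial (Quaternion ℝ) :=
  Polynomial.X ^ 2 - Polynomial.C ((2 * q.re : ℝ) : Quaternion ℝ) * Polynomial.X
    + Polynomial.C ((‖q‖ ^ 2 : ℝ) : Quaternion ℝ)

lemma C_coe_eq (r : ℝ) :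
    (Polynomial.C ((r : ℝ) : Quaternion ℝ)) = algebraMap ℝ (Polynomial (Quaternion ℝ)) r := by
  rw [Polynomial.algebraMap_apply]
  rfl

lemma commute_charQ (q : Quaternion ℝ) (p : Polynomial (Quaternion ℝ)) :
    Commute (charQ q) p := by
  unfold charQ
  refine Commute.add_left (Commute.sub_left ?_ ?_) ?_
  · exact ((Polynomial.commute_X p).pow_left 2)
  · refine Commute.mul_left ?_ (Polynomial.commute_X p)
    rw [C_coe_eq]
    exact Algebra.commute_algebraMap_left _ _
  · rw [C_coe_eq]
    exact Algebra.commute_algebraMap_left _ _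

lemma charQ_monic (q : Quaternion ℝ) : (charQ q).Monic := by
  have h : charQ q = Polynomial.X ^ 2
      - (Polynomial.C ((2 * q.re : ℝ) : Quaternion ℝ) * Polynomial.X
        - Polynomial.C ((‖q‖ ^ 2 : ℝ) : Quaternion ℝ)) := by
    unfold charQ; rw [sub_add]
  rw [h]
  apply Polynomial.monic_X_pow_sub
  refine lt_of_le_of_lt ?_ (by norm_num : (1 : WithBot ℕ) < 2)
  compute_degree

lemma charQ_degree (q : Quaternion ℝ) : (charQ q).degree = 2 := by
  unfold charQ
  compute_degree!

lemma coeff_charQ_commute (q x : Quaternion ℝ) (k : ℕ) :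
    Commute ((charQ q).coeff k) x := by
  unfold charQ
  simp only [Polynomial.coeff_add, Polynomial.coeff_sub, Polynomial.coeff_X_pow,
    Polynomial.coeff_C_mul, Polynomial.coeff_X, Polynomial.coeff_C]
  refine Commute.add_left (Commute.sub_left ?_ ?_) ?_ <;>
    · split_ifs <;> simp [Quaternion.coe_commute, Commute.zero_left, Commute.one_left]

lemma eval_mul_charQ (q x : Quaternion ℝ) (p : Polynomial (Quaternion ℝ)) :
    (p * charQ q).eval x = p.eval x * (charQ q).eval x :=
  Polynomial.eval₂_mul_noncomm _ _ fun k => coeff_charQ_commute q x k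

lemma quat_identity (x : Quaternion ℝ) :
    x ^ 2 - ((2 * x.re : ℝ) : Quaternion ℝ) * x + ((normSq x : ℝ) : Quaternion ℝ) = 0 := by
  rw [← Quaternion.self_add_star' x, ← Quaternion.star_mul_self x, sq]
  noncomm_ring

lemma eval_charQ (q x : Quaternion ℝ) (h1 : x.re = q.re) (h2 : ‖x‖ = ‖q‖) :
    (charQ q).eval x = 0 := by
  have : (charQ q).eval x
      = x ^ 2 - ((2 * q.re : ℝ) : Quaternion ℝ) * x + ((‖q‖ ^ 2 : ℝ) : Quaternion ℝ) := by
    unfold charQ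
    simp only [Polynomial.eval_add, Polynomial.eval_sub, Polynomial.eval_C_mul,
      Polynomial.eval_C, Polynomial.eval_X, ← sq,
      show Polynomial.eval x ((Polynomial.X : Polynomial (Quaternion ℝ)) ^ 2) = x ^ 2 from
        Polynomial.eval₂_X_pow _ _]
  rw [this, ← h1, ← h2, show (‖x‖ ^ 2 : ℝ) = normSq x by
    rw [sq, ← Quaternion.normSq_eq_norm_mul_self]]
  exact quat_identity x

theorem conj_pair_zero_iff_charPoly_dvd (P : Polynomial (Quaternion ℝ)) (q : Quaternion ℝ)
    (hq : q.im ≠ 0) :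
    (P.eval q = 0 ∧ P.eval (star q) = 0) ↔
      ∃ Q' : Polynomial (Quaternion ℝ),
        P = Q' * (Polynomial.X ^ 2
          - Polynomial.C ((2 * q.re : ℝ) : Quaternion ℝ) * Polynomial.X
          + Polynomial.C ((‖q‖ ^ 2 : ℝ) : Quaternion ℝ)) := by
  have hQdef : (Polynomial.X ^ 2
      - Polynomial.C ((2 * q.re : ℝ) : Quaternion ℝ) * Polynomial.X
      + Polynomial.C ((‖q‖ ^ 2 : ℝ) : Quaternion ℝ)) = charQ q := rfl
  simp only [hQdef]
  have hevq : (charQ q).eval q = 0 := eval_charQ q q rfl rfl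
  have hevs : (charQ q).eval (star q) = 0 := eval_charQ q (star q) (Quaternion.re_star q) (Quaternion.norm_star q)
  constructor
  · rintro ⟨h1, h2⟩
    have hm := charQ_monic q
    have key := Polynomial.modByMonic_add_div P (charQ q)
    rw [(commute_charQ q (P /ₘ charQ q)).eq] at key
    set R := P %ₘ charQ q with hRdef
    have hdeg : R.degree < 2 := by
      simpa [charQ_degree q] using Polynomial.degree_modByMonic_lt P hm
    have hdeg1 : R.degree ≤ 1 := by
      by_contra hc
      push_neg at hc
      obtain ⟨n, hn, h1n⟩ := WithBot.lt_iff_exists_coe.mp hc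
      rw [hn] at hdeg
      have h2 : n < 2 := WithBot.coe_lt_coe.mp hdeg
      have h3 : 1 < n := WithBot.coe_lt_coe.mp h1n
      omega
    have hrep := Polynomial.eq_X_add_C_of_degree_le_one hdeg1
    have e : ∀ x : Quaternion ℝ, (charQ q).eval x = 0 → P.eval x = 0 →
        R.coeff 1 * x + R.coeff 0 = 0 := by
      intro x hx hPx
      have := congrArg (Polynomial.eval x) key
      rw [Polynomial.eval_add, eval_mul_charQ, hx, mul_zero, add_zero, hPx] at this
      calc R.coeff 1 * x + R.coeff 0
          = R.eval x := by
            conv_rhs => rw [hrep]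
            simp [Polynomial.eval_C_mul]
        _ = 0 := this
    have e1 := e q hevq h1
    have e2 := e (star q) hevs h2
    have hsub : R.coeff 1 * (q - star q) = 0 := by
      have := sub_eq_zero_of_eq (e1.trans e2.symm)
      rw [add_sub_add_right_eq_sub, ← mul_sub] at this
      exact this
    have hne : q - star q ≠ 0 := by
      intro h
      apply hq
      have hqs : q = star q := eq_of_sub_eq_zero h
      have : q = (q.re : Quaternion ℝ) := Quaternion.star_eq_self.mp hqs.symm
      rw [this]
      exact Quaternion.im_coe ..
    have ha : R.coeff 1 = 0 := by
      rcases mul_eq_zero.mp hsub with h | h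
      · exact h
      · exact absurd h hne
    have hb : R.coeff 0 = 0 := by
      have := e1
      rw [ha, zero_mul, zero_add] at this
      exact this
    have hR0 : R = 0 := by rw [hrep, ha, hb]; simp
    rw [hR0, zero_add] at key
    exact ⟨P /ₘ charQ q, key.symm⟩
  · rintro ⟨Q', rfl⟩
    constructor
    · rw [eval_mul_charQ, hevq, mul_zero]
    · rw [eval_mul_charQ, hevs, mul_zero]
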